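/- Let $F$ be a field equipped with a nonarchimedean absolute value $|\cdot|$ such that $0 < |2| < 1$, and let $a, b \in F$ satisfy $a^2 = 2$ and $b^2 = -1$. With $P = \begin{pmatrix} -a & -a \\ -1 & 1\end{pmatrix}$, $Q = \begin{pmatrix} -1-b & 1-b \\ -1 & 1\end{pmatrix}$, $A = \begin{pmatrix} 2 & 0 \\ 0 & 1 \end{pmatrix}$, set $\gamma_1 = P A P^{-1}$ and $\gamma_2 = Q A Q^{-1}$ in $GL_2(F)$. Then the images of $\gamma_1$ and $\gamma_2$ in $PGL_2(F) = GL_2(F)/\mathrm{center}$ generate a free group of rank 2; equivalently, the group homomorphism from the free group on two generators to $GL_2(F)/\mathrm{center}$ sending the generators to the classes of $\gamma_1$ and $\gamma_2$ is injective. -/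

import Mathlib

open Matrix Projectivization Pointwise
open scoped LinearAlgebra.Projectivization

set_option maxHeartbeats 1000000

section Aux

variable {F : Type*} [Field F]

private lemma pp_no_lt_self {c x : ℝ} (hx : 0 ≤ x) (hc : c < 1) (h : x < c * x) : False := by
  nlinarith

/-- A matrix unit gives an injective `mulVec`. -/
private lemma unit_mulVec_injective (g : (Matrix (Fin 2) (Fin 2) F)ˣ) :
    Function.Injective ((g : Matrix (Fin 2) (Fin 2) F).mulVecLin) := by
  intro x y hxy
  simp only [Matrix.mulVecLin_apply] at hxy
  have h1 : ((g⁻¹ * g : (Matrix (Fin 2) (Fin 2) F)ˣ) : Matrix (Fin 2) (Fin 2) F) = 1 := by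
    rw [inv_mul_cancel]; rfl
  calc x = ((g⁻¹ * g : (Matrix (Fin 2) (Fin 2) F)ˣ) : Matrix (Fin 2) (Fin 2) F) *ᵥ x := by
        rw [h1, Matrix.one_mulVec]
  _ = ((g⁻¹ : (Matrix (Fin 2) (Fin 2) F)ˣ) : Matrix (Fin 2) (Fin 2) F) *ᵥ
        ((g : Matrix (Fin 2) (Fin 2) F) *ᵥ x) := by rw [Units.val_mul, ← Matrix.mulVec_mulVec]
  _ = ((g⁻¹ : (Matrix (Fin 2) (Fin 2) F)ˣ) : Matrix (Fin 2) (Fin 2) F) *ᵥ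
        ((g : Matrix (Fin 2) (Fin 2) F) *ᵥ y) := by rw [hxy]
  _ = y := by rw [Matrix.mulVec_mulVec, ← Units.val_mul, inv_mul_cancel, Units.val_one,
        Matrix.one_mulVec]

private lemma unit_mulVec_ne_zero (g : (Matrix (Fin 2) (Fin 2) F)ˣ) {w : Fin 2 → F}
    (hw : w ≠ 0) : (g : Matrix (Fin 2) (Fin 2) F) *ᵥ w ≠ 0 := by
  intro h
  apply hw
  apply unit_mulVec_injective g
  simpa using h

private lemma mk_congr {v w : Fin 2 → F} (h : v = w) (hv : v ≠ 0) (hw : w ≠ 0) :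
    Projectivization.mk F v hv = Projectivization.mk F w hw := by subst h; rfl

/-- The self map of `ℙ¹(F)` attached to an invertible matrix. -/
private noncomputable def glMap (g : (Matrix (Fin 2) (Fin 2) F)ˣ) :
    ℙ F (Fin 2 → F) → ℙ F (Fin 2 → F) :=
  Projectivization.map ((g : Matrix (Fin 2) (Fin 2) F).mulVecLin) (unit_mulVec_injective g)

private lemma glMap_mk (g : (Matrix (Fin 2) (Fin 2) F)ˣ) (w : Fin 2 → F) (hw : w ≠ 0) :
    glMap g (Projectivization.mk F w hw) =
      Projectivization.mk F ((g : Matrix (Fin 2) (Fin 2) F) *ᵥ w) (unit_mulVec_ne_zero g hw) := by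
  unfold glMap
  rw [Projectivization.map_mk]
  exact mk_congr (by simp) _ _

/-- The monoid hom from `GL₂(F)` to self maps of `ℙ¹(F)`. -/
private noncomputable def glProjEnd (F : Type*) [Field F] :
    (Matrix (Fin 2) (Fin 2) F)ˣ →* Function.End (ℙ F (Fin 2 → F)) where
  toFun g := glMap g
  map_one' := by
    funext x
    induction x using Projectivization.ind with
    | h w hw =>
      show glMap 1 (Projectivization.mk F w hw) = Projectivization.mk F w hw
      rw [glMap_mk]
      exact mk_congr (by simp) _ _
  map_mul' g h := by
    funext x
    induction x using Projectivization.ind with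
    | h w hw =>
      show glMap (g * h) (Projectivization.mk F w hw) =
        glMap g (glMap h (Projectivization.mk F w hw))
      rw [glMap_mk, glMap_mk, glMap_mk]
      exact mk_congr (by rw [Units.val_mul, ← Matrix.mulVec_mulVec]) _ _

private lemma glProjEnd_mk (g : (Matrix (Fin 2) (Fin 2) F)ˣ) (w : Fin 2 → F) (hw : w ≠ 0) :
    glProjEnd F g (Projectivization.mk F w hw) =
      Projectivization.mk F ((g : Matrix (Fin 2) (Fin 2) F) *ᵥ w) (unit_mulVec_ne_zero g hw) :=
  glMap_mk g w hw

/-- Central units of the 2×2 matrix algebra are nonzero scalars. -/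
private lemma center_units_scalar {g : (Matrix (Fin 2) (Fin 2) F)ˣ}
    (hg : g ∈ Subgroup.center (Matrix (Fin 2) (Fin 2) F)ˣ) :
    ∃ r : F, r ≠ 0 ∧ (g : Matrix (Fin 2) (Fin 2) F) = r • (1 : Matrix (Fin 2) (Fin 2) F) := by
  have hcomm : ∀ t : Matrix.TransvectionStruct (Fin 2) F,
      Commute t.toMatrix (g : Matrix (Fin 2) (Fin 2) F) := by
    intro t
    have hdet : IsUnit t.toMatrix.det := by
      rw [Matrix.TransvectionStruct.det]; exact isUnit_one
    set u : (Matrix (Fin 2) (Fin 2) F)ˣ := t.toMatrix.nonsingInvUnit hdet with hu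
    have h := Subgroup.mem_center_iff.mp hg u
    have h2 := congrArg Units.val h
    simpa [Commute, SemiconjBy, hu, Matrix.nonsingInvUnit] using h2
  obtain ⟨r, hr⟩ := Matrix.mem_range_scalar_of_commute_transvectionStruct hcomm
  refine ⟨r, ?_, ?_⟩
  · intro h0
    have hval : (g : Matrix (Fin 2) (Fin 2) F) = 0 := by
      rw [← hr, h0]; simp
    have h1 : (g : Matrix (Fin 2) (Fin 2) F) * ((g⁻¹ : _ˣ) : Matrix (Fin 2) (Fin 2) F) = 1 := by
      rw [← Units.val_mul]; simp
    rw [hval, zero_mul] at h1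
    have h2 := congrFun (congrFun h1 0) 0
    simp at h2
  · rw [← hr, Matrix.scalar_apply]
    exact (Matrix.smul_one_eq_diagonal r).symm

end Aux

universe uG uA

private theorem pingpong_wrapper {G : Type uG} [Group G] {α : Type uA} [MulAction G α]
    (afun : Fin 2 → G) (X Y : Fin 2 → Set α)
    (hXne : ∀ i, (X i).Nonempty)
    (hXd : Pairwise (Function.onFun Disjoint X))
    (hYd : Pairwise (Function.onFun Disjoint Y))
    (hXY : ∀ i j, Disjoint (X i) (Y j))
    (hX : ∀ i, afun i • (Y i)ᶜ ⊆ X i)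
    (hY : ∀ i, afun⁻¹ i • (X i)ᶜ ⊆ Y i) :
    Function.Injective (FreeGroup.lift afun) := by
  haveI : Nontrivial (ULift.{uG} (Fin 2)) :=
    ⟨⟨ULift.up 0, ULift.up 1, fun h => absurd (congrArg ULift.down h) (by decide)⟩⟩
  have hdown : ∀ {i j : ULift.{uG} (Fin 2)}, i ≠ j → i.down ≠ j.down := by
    intro i j hij h
    apply hij
    cases i; cases j; cases h; rfl
  have h : Function.Injective (FreeGroup.lift (fun i : ULift.{uG} (Fin 2) => afun i.down)) :=
    FreeGroup.injective_lift_of_ping_pong _ (fun i => X i.down) (fun i => Y i.down)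
      (fun i => hXne i.down)
      (fun _ _ hij => hXd (hdown hij))
      (fun _ _ hij => hYd (hdown hij))
      (fun i j => hXY i.down j.down)
      (fun i => hX i.down)
      (fun i => hY i.down)
  have hcomp : FreeGroup.lift afun =
      (FreeGroup.lift (fun i : ULift.{uG} (Fin 2) => afun i.down)).comp
        (FreeGroup.freeGroupCongr (Equiv.ulift.symm)).toMonoidHom := by
    ext i
    simp
  rw [hcomp]
  exact h.comp (MulEquiv.injective _)


/-- With `0 < |2| < 1`, `a² = 2`, `b² = -1`, the images in
`PGL₂(F) = GL₂(F)/center` of `γ₁ = P A P⁻¹` and `γ₂ = Q A Q⁻¹` generate a free group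
of rank 2: the homomorphism from the free group on two generators to `GL₂(F)/center`
sending the generators to the classes of `γ₁` and `γ₂` is injective. -/
theorem schottky_group_free_of_rank_two {F : Type*} [Field F]
    (v : AbsoluteValue F ℝ) (hna : IsNonarchimedean v)
    (h2pos : 0 < v 2) (h2lt : v 2 < 1)
    (a b : F) (ha : a ^ 2 = 2) (hb : b ^ 2 = -1)
    (g₁ g₂ : (Matrix (Fin 2) (Fin 2) F)ˣ)
    (hg₁ : (g₁ : Matrix (Fin 2) (Fin 2) F) =
      !![-a, -a; -1, 1] * !![2, 0; 0, 1] * !![-a, -a; -1, 1]⁻¹)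
    (hg₂ : (g₂ : Matrix (Fin 2) (Fin 2) F) =
      !![-1 - b, 1 - b; -1, 1] * !![2, 0; 0, 1] * !![-1 - b, 1 - b; -1, 1]⁻¹) :
    Function.Injective
      ((QuotientGroup.mk' (Subgroup.center (Matrix (Fin 2) (Fin 2) F)ˣ)).comp
        (FreeGroup.lift ![g₁, g₂])) := by
  classical
  -- basic facts about the field constants
  have two_ne : (2 : F) ≠ 0 := by
    intro h
    rw [h] at h2pos
    simp at h2pos
  have ha0 : a ≠ 0 := by
    intro h
    rw [h] at ha
    exact two_ne (by simpa using ha.symm)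
  have hb0 : b ≠ 0 := by
    intro h
    rw [h] at hb
    have : (1 : F) = 0 := by linear_combination hb
    simp at this
  have h2a : (2 : F) * a ≠ 0 := mul_ne_zero two_ne ha0
  have h2b : (2 : F) * b ≠ 0 := mul_ne_zero two_ne hb0
  -- absolute values
  set t : ℝ := Real.sqrt (v 2) with htdef
  have ht2 : t ^ 2 = v 2 := Real.sq_sqrt h2pos.le
  have hv2 : v 2 = t ^ 2 := ht2.symm
  have ht0 : 0 < t := Real.sqrt_pos.mpr h2pos
  have ht1 : t < 1 := by nlinarith [ht2, ht0]
  have hva : v a = t := by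
    have h1 : v a ^ 2 = v 2 := by rw [← _root_.map_pow, ha]
    rw [htdef, ← h1, Real.sqrt_sq (v.nonneg a)]
  have hvb : v b = 1 := by
    have h1 : v b ^ 2 = 1 := by rw [← _root_.map_pow, hb, v.map_neg, _root_.map_one]
    nlinarith [v.nonneg b]
  have hv1pb : v (1 + b) = t := by
    have h1 : v (1 + b) ^ 2 = v 2 := by
      rw [← _root_.map_pow, show (1 + b) ^ 2 = 2 * b by linear_combination hb, _root_.map_mul, hvb, mul_one]
    rw [htdef, ← h1, Real.sqrt_sq (v.nonneg _)]
  have hv1mb : v (1 - b) = t := by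
    have h1 : v (1 - b) ^ 2 = v 2 := by
      rw [← _root_.map_pow, show (1 - b) ^ 2 = -(2 * b) by linear_combination hb, v.map_neg,
        _root_.map_mul, hvb, mul_one]
    rw [htdef, ← h1, Real.sqrt_sq (v.nonneg _)]
  -- the contraction constant
  set c : ℝ := (1 + v 2) / 2 with hcdef
  have hc0 : 0 < c := by rw [hcdef]; nlinarith
  have hc1 : c < 1 := by rw [hcdef]; nlinarith
  have hsc : t ^ 2 < c ^ 2 := by
    rw [ht2, hcdef]
    nlinarith [mul_pos (sub_pos.mpr h2lt) (sub_pos.mpr h2lt)]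
  -- matrices
  set Pm : Matrix (Fin 2) (Fin 2) F := !![-a, -a; -1, 1] with hPm
  set Qm : Matrix (Fin 2) (Fin 2) F := !![-1 - b, 1 - b; -1, 1] with hQm
  set Am : Matrix (Fin 2) (Fin 2) F := !![2, 0; 0, 1] with hAm
  have hPdet : IsUnit Pm.det := by
    rw [hPm, Matrix.det_fin_two_of]
    simp only [isUnit_iff_ne_zero]
    intro h
    exact h2a (by linear_combination -h)
  have hQdet : IsUnit Qm.det := by
    rw [hQm, Matrix.det_fin_two_of]
    simp only [isUnit_iff_ne_zero]
    intro h
    exact h2b (by linear_combination -h)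
  have hg1P : (g₁ : Matrix (Fin 2) (Fin 2) F) * Pm = Pm * Am := by
    rw [hg₁, Matrix.mul_assoc, Matrix.nonsing_inv_mul Pm hPdet, Matrix.mul_one]
  have hg2Q : (g₂ : Matrix (Fin 2) (Fin 2) F) * Qm = Qm * Am := by
    rw [hg₂, Matrix.mul_assoc, Matrix.nonsing_inv_mul Qm hQdet, Matrix.mul_one]
  -- cancellation of vecMul against invertible matrices
  have hcancel : ∀ (R : Matrix (Fin 2) (Fin 2) F), IsUnit R.det →
      ∀ x y : Fin 2 → F, x ᵥ* R = y ᵥ* R → x = y := by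
    intro R hR x y hxy
    have h2 := congrArg (fun z => z ᵥ* R⁻¹) hxy
    simpa [Matrix.vecMul_vecMul, Matrix.mul_nonsing_inv R hR, Matrix.vecMul_one] using h2
  -- eigenrow identities
  have hrow1 : ![1, a] ᵥ* (g₁ : Matrix (Fin 2) (Fin 2) F) = (2 : F) • ![1, a] := by
    apply hcancel Pm hPdet
    rw [Matrix.vecMul_vecMul, hg1P]
    funext i
    fin_cases i <;>
      simp [Matrix.vecMul, dotProduct, Fin.sum_univ_two, Matrix.mul_apply, hPm, hAm] <;>
      ring
  have hrow2 : ![1, -a] ᵥ* (g₁ : Matrix (Fin 2) (Fin 2) F) = ![1, -a] := by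
    apply hcancel Pm hPdet
    rw [Matrix.vecMul_vecMul, hg1P]
    funext i
    fin_cases i <;>
      simp [Matrix.vecMul, dotProduct, Fin.sum_univ_two, Matrix.mul_apply, hPm, hAm] <;>
      ring
  have hrow3 : ![1, b - 1] ᵥ* (g₂ : Matrix (Fin 2) (Fin 2) F) = (2 : F) • ![1, b - 1] := by
    apply hcancel Qm hQdet
    rw [Matrix.vecMul_vecMul, hg2Q]
    funext i
    fin_cases i <;>
      simp [Matrix.vecMul, dotProduct, Fin.sum_univ_two, Matrix.mul_apply, hQm, hAm] <;>
      ring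
  have hrow4 : ![1, -(1 + b)] ᵥ* (g₂ : Matrix (Fin 2) (Fin 2) F) = ![1, -(1 + b)] := by
    apply hcancel Qm hQdet
    rw [Matrix.vecMul_vecMul, hg2Q]
    funext i
    fin_cases i <;>
      simp [Matrix.vecMul, dotProduct, Fin.sum_univ_two, Matrix.mul_apply, hQm, hAm] <;>
      ring
  -- inverse eigenrow identities
  have hrowinv : ∀ (g : (Matrix (Fin 2) (Fin 2) F)ˣ) (r : Fin 2 → F),
      r ᵥ* (g : Matrix (Fin 2) (Fin 2) F) = (2 : F) • r →
      r ᵥ* ((g⁻¹ : (Matrix (Fin 2) (Fin 2) F)ˣ) : Matrix (Fin 2) (Fin 2) F) = (2⁻¹ : F) • r := by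
    intro g r hr
    have h := congrArg
      (fun z => z ᵥ* ((g⁻¹ : (Matrix (Fin 2) (Fin 2) F)ˣ) : Matrix (Fin 2) (Fin 2) F)) hr
    simp only [Matrix.vecMul_vecMul, Matrix.vecMul_smul] at h
    rw [← Units.val_mul, mul_inv_cancel, Units.val_one, Matrix.vecMul_one] at h
    conv_rhs => rw [h]
    rw [Matrix.smul_vecMul, smul_smul, inv_mul_cancel₀ two_ne, one_smul]
  have hrowfix : ∀ (g : (Matrix (Fin 2) (Fin 2) F)ˣ) (r : Fin 2 → F),
      r ᵥ* (g : Matrix (Fin 2) (Fin 2) F) = r →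
      r ᵥ* ((g⁻¹ : (Matrix (Fin 2) (Fin 2) F)ˣ) : Matrix (Fin 2) (Fin 2) F) = r := by
    intro g r hr
    have h := congrArg
      (fun z => z ᵥ* ((g⁻¹ : (Matrix (Fin 2) (Fin 2) F)ˣ) : Matrix (Fin 2) (Fin 2) F)) hr
    simp only [Matrix.vecMul_vecMul] at h
    rw [← Units.val_mul, mul_inv_cancel, Units.val_one, Matrix.vecMul_one] at h
    exact h.symm
  -- functional transformation under the action
  have hdot : ∀ (p : F) (w : Fin 2 → F), ![1, p] ⬝ᵥ w = w 0 + p * w 1 := by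
    intro p w
    simp [dotProduct, Fin.sum_univ_two]
  have hfun : ∀ (g : (Matrix (Fin 2) (Fin 2) F)ˣ) (p k : F),
      (![1, p] ᵥ* (g : Matrix (Fin 2) (Fin 2) F) = k • ![1, p]) → ∀ w : Fin 2 → F,
      ((g : Matrix (Fin 2) (Fin 2) F) *ᵥ w) 0 + p * ((g : Matrix (Fin 2) (Fin 2) F) *ᵥ w) 1 =
        k * (w 0 + p * w 1) := by
    intro g p k hrow w
    have h := dotProduct_mulVec ![1, p] (g : Matrix (Fin 2) (Fin 2) F) w
    rw [hrow] at h
    rw [← hdot p, h, smul_dotProduct, hdot, smul_eq_mul]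
  -- transfer of conditions along representatives
  have hrepcond : ∀ (p q : F) (w : Fin 2 → F) (hw : w ≠ 0),
      (v ((Projectivization.mk F w hw).rep 0 + p * (Projectivization.mk F w hw).rep 1) <
        c * v ((Projectivization.mk F w hw).rep 0 + q * (Projectivization.mk F w hw).rep 1)) ↔
      (v (w 0 + p * w 1) < c * v (w 0 + q * w 1)) := by
    intro p q w hw
    obtain ⟨u, hu⟩ := Projectivization.exists_smul_eq_mk_rep F w hw
    rw [← hu]
    have e : ∀ r : F, (u • w) 0 + r * (u • w) 1 = (u : F) * (w 0 + r * w 1) := by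
      intro r
      simp only [Pi.smul_apply, Units.smul_def, smul_eq_mul]
      ring
    rw [e p, e q, _root_.map_mul, _root_.map_mul,
      show c * (v (u : F) * v (w 0 + q * w 1)) = v (u : F) * (c * v (w 0 + q * w 1)) by ring]
    exact mul_lt_mul_iff_right₀ (v.pos (Units.ne_zero u))
  -- zero vector from the vanishing of the two functionals
  have hzero : ∀ (p q : F), p ≠ q → ∀ w : Fin 2 → F,
      w 0 + p * w 1 = 0 → w 0 + q * w 1 = 0 → w = 0 := by
    intro p q hpq w h1 h2
    have hw1 : w 1 = 0 := by
      have h3 : (p - q) * w 1 = 0 := by linear_combination h1 - h2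
      rcases mul_eq_zero.mp h3 with h4 | h4
      · exact absurd (sub_eq_zero.mp h4) hpq
      · exact h4
    have hw0 : w 0 = 0 := by
      rw [hw1] at h1
      simpa using h1
    funext i
    fin_cases i
    · simpa using hw0
    · simpa using hw1
  -- nonarchimedean disjointness core
  have hdisj_core : ∀ (p q p' q' : F), v (q - p) ≤ t ^ 2 → v (q' - p') ≤ t ^ 2 →
      t ^ 2 ≤ v (p - p') → ∀ w : Fin 2 → F,
      v (w 0 + p * w 1) < c * v (w 0 + q * w 1) →
      v (w 0 + p' * w 1) < c * v (w 0 + q' * w 1) → False := by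
    intro p q p' q' hqp hqp' hpp' w h1 h2
    have key : ∀ (p q : F), v (q - p) ≤ t ^ 2 →
        v (w 0 + p * w 1) < c * v (w 0 + q * w 1) →
        v (w 0 + p * w 1) < c * (t ^ 2 * v (w 1)) := by
      intro p q hqp h1
      have hT : v (w 0 + q * w 1) ≤ max (v (w 0 + p * w 1)) (t ^ 2 * v (w 1)) := by
        rw [show w 0 + q * w 1 = (w 0 + p * w 1) + (q - p) * w 1 by ring]
        refine le_trans (hna _ _) (max_le_max le_rfl ?_)
        rw [_root_.map_mul]
        exact mul_le_mul_of_nonneg_right hqp (v.nonneg _)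
      rcases le_or_gt (t ^ 2 * v (w 1)) (v (w 0 + p * w 1)) with hle | hlt
      · exfalso
        have h3 : v (w 0 + q * w 1) ≤ v (w 0 + p * w 1) := le_trans hT (max_le le_rfl hle)
        exact pp_no_lt_self (v.nonneg _) hc1
          (lt_of_lt_of_le h1 (mul_le_mul_of_nonneg_left h3 hc0.le))
      · have h3 : v (w 0 + q * w 1) ≤ t ^ 2 * v (w 1) := le_trans hT (max_le hlt.le le_rfl)
        exact lt_of_lt_of_le h1 (mul_le_mul_of_nonneg_left h3 hc0.le)
    have k1 := key p q hqp h1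
    have k2 := key p' q' hqp' h2
    have hXle : v (p - p') * v (w 1) ≤ max (v (w 0 + p * w 1)) (v (w 0 + p' * w 1)) := by
      rw [← _root_.map_mul, show (p - p') * w 1 = (w 0 + p * w 1) + (-(w 0 + p' * w 1)) by ring]
      refine le_trans (hna _ _) ?_
      rw [v.map_neg]
    have hfin : t ^ 2 * v (w 1) < c * (t ^ 2 * v (w 1)) := by
      have h3 : t ^ 2 * v (w 1) ≤ v (p - p') * v (w 1) :=
        mul_le_mul_of_nonneg_right hpp' (v.nonneg _)
      exact lt_of_le_of_lt (le_trans h3 hXle) (max_lt k1 k2)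
    exact pp_no_lt_self (mul_nonneg (sq_nonneg t) (v.nonneg _)) hc1 hfin
  -- symmetric distances
  have hdsym : ∀ x y : F, v (x - y) = v (y - x) := by
    intro x y
    rw [show x - y = -(y - x) by ring, v.map_neg]
  -- distances within pairs
  have hd1 : v ((-a) - a) ≤ t ^ 2 := by
    rw [show (-a) - a = -(2 * a) by ring, v.map_neg, _root_.map_mul, hv2, hva]
    nlinarith [ht0, ht1]
  have hd1b : v (a - (-a)) ≤ t ^ 2 := by rw [hdsym]; exact hd1
  have hd2 : v ((-(1 + b)) - (b - 1)) ≤ t ^ 2 := by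
    rw [show (-(1 + b)) - (b - 1) = -(2 * b) by ring, v.map_neg, _root_.map_mul, hv2, hvb, mul_one]
  have hd2b : v ((b - 1) - (-(1 + b))) ≤ t ^ 2 := by rw [hdsym]; exact hd2
  -- cross distances
  have hsep : ∀ e f : F, (e = a ∨ e = -a) → (f = b - 1 ∨ f = -(1 + b)) → t ^ 2 ≤ v (e - f) := by
    intro e f he hf
    have he2 : e ^ 2 = 2 := by
      rcases he with rfl | rfl
      · exact ha
      · rw [show (-a) ^ 2 = a ^ 2 by ring]; exact ha
    have hve : v e = t := by
      rcases he with rfl | rfl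
      · exact hva
      · rw [v.map_neg]; exact hva
    have hvf : v f = t := by
      rcases hf with rfl | rfl
      · rw [show b - 1 = -(1 - b) by ring, v.map_neg]; exact hv1mb
      · rw [v.map_neg]; exact hv1pb
    have hsum : v (e + f) ≤ t := by
      refine le_trans (hna e f) ?_
      rw [hve, hvf]
      simp
    have hprod : v (e - f) * v (e + f) = t ^ 2 * t := by
      rw [← _root_.map_mul]
      rcases hf with rfl | rfl
      · rw [show (e - (b - 1)) * (e + (b - 1)) = 2 * (1 + b) by linear_combination he2 - hb,
          _root_.map_mul, hv2, hv1pb]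
      · rw [show (e - -(1 + b)) * (e + -(1 + b)) = 2 * (1 - b) by linear_combination he2 - hb,
          _root_.map_mul, hv2, hv1mb]
    have h5 : t ^ 2 * t ≤ v (e - f) * t := by
      calc t ^ 2 * t = v (e - f) * v (e + f) := hprod.symm
      _ ≤ v (e - f) * t := mul_le_mul_of_nonneg_left hsum (v.nonneg _)
    exact le_of_mul_le_mul_right h5 ht0
  -- the projective action of PGL₂
  set N : Subgroup (Matrix (Fin 2) (Fin 2) F)ˣ :=
    Subgroup.center (Matrix (Fin 2) (Fin 2) F)ˣ with hN
  have hker : N ≤ (glProjEnd F).ker := by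
    intro g hg
    obtain ⟨r, hr0, hrv⟩ := center_units_scalar hg
    rw [MonoidHom.mem_ker]
    funext x
    induction x using Projectivization.ind with
    | h w hw =>
      show glProjEnd F g (Projectivization.mk F w hw) = Projectivization.mk F w hw
      rw [glProjEnd_mk]
      rw [Projectivization.mk_eq_mk_iff]
      refine ⟨Units.mk0 r hr0, ?_⟩
      rw [hrv, Matrix.smul_mulVec, Matrix.one_mulVec]
      rfl
  set ψ : (Matrix (Fin 2) (Fin 2) F)ˣ ⧸ N →* Function.End (ℙ F (Fin 2 → F)) :=
    QuotientGroup.lift N (glProjEnd F) hker with hψ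
  letI actInst : MulAction ((Matrix (Fin 2) (Fin 2) F)ˣ ⧸ N) (ℙ F (Fin 2 → F)) :=
    MulAction.compHom _ ψ
  have hsmul : ∀ (g : (Matrix (Fin 2) (Fin 2) F)ˣ) (w : Fin 2 → F) (hw : w ≠ 0),
      (QuotientGroup.mk' N g) • (Projectivization.mk F w hw) =
        Projectivization.mk F ((g : Matrix (Fin 2) (Fin 2) F) *ᵥ w)
          (unit_mulVec_ne_zero g hw) := by
    intro g w hw
    show ψ (QuotientGroup.mk' N g) (Projectivization.mk F w hw) = _
    rw [QuotientGroup.mk'_apply, hψ, QuotientGroup.lift_mk']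
    exact glProjEnd_mk g w hw
  -- the ping pong sets
  set Xs : Fin 2 → Set (ℙ F (Fin 2 → F)) := ![
    {x | v (x.rep 0 + a * x.rep 1) < c * v (x.rep 0 + (-a) * x.rep 1)},
    {x | v (x.rep 0 + (b - 1) * x.rep 1) < c * v (x.rep 0 + (-(1 + b)) * x.rep 1)}] with hXs
  set Ys : Fin 2 → Set (ℙ F (Fin 2 → F)) := ![
    {x | v (x.rep 0 + (-a) * x.rep 1) < c * v (x.rep 0 + a * x.rep 1)},
    {x | v (x.rep 0 + (-(1 + b)) * x.rep 1) < c * v (x.rep 0 + (b - 1) * x.rep 1)}] with hYs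
  -- disjointness criteria phrased with sets
  have hdisjXY : ∀ (p q p' q' : F), v (q - p) ≤ t ^ 2 → v (q' - p') ≤ t ^ 2 →
      t ^ 2 ≤ v (p - p') →
      Disjoint {x : ℙ F (Fin 2 → F) | v (x.rep 0 + p * x.rep 1) < c * v (x.rep 0 + q * x.rep 1)}
        {x : ℙ F (Fin 2 → F) |
          v (x.rep 0 + p' * x.rep 1) < c * v (x.rep 0 + q' * x.rep 1)} := by
    intro p q p' q' h1 h2 h3
    rw [Set.disjoint_left]
    intro x hx1 hx2
    exact hdisj_core p q p' q' h1 h2 h3 x.rep hx1 hx2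
  have hdisjsame : ∀ (p q : F),
      Disjoint {x : ℙ F (Fin 2 → F) | v (x.rep 0 + p * x.rep 1) < c * v (x.rep 0 + q * x.rep 1)}
        {x : ℙ F (Fin 2 → F) |
          v (x.rep 0 + q * x.rep 1) < c * v (x.rep 0 + p * x.rep 1)} := by
    intro p q
    rw [Set.disjoint_left]
    intro x hx1 hx2
    have h1 : v (x.rep 0 + p * x.rep 1) < c * v (x.rep 0 + q * x.rep 1) := hx1
    have h2 : v (x.rep 0 + q * x.rep 1) < c * v (x.rep 0 + p * x.rep 1) := hx2
    nlinarith [v.nonneg (x.rep 0 + p * x.rep 1), v.nonneg (x.rep 0 + q * x.rep 1), hc0, hc1]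
  -- assemble the hypotheses of the ping pong lemma
  have hXd : Pairwise (Function.onFun Disjoint Xs) := by
    have h01 : Disjoint (Xs 0) (Xs 1) := by
      rw [hXs]
      exact hdisjXY a (-a) (b - 1) (-(1 + b)) hd1 hd2
        (hsep a (b - 1) (Or.inl rfl) (Or.inl rfl))
    intro i j hij
    fin_cases i <;> fin_cases j <;>
      first
        | exact absurd rfl hij
        | exact h01
        | exact h01.symm
  have hYd : Pairwise (Function.onFun Disjoint Ys) := by
    have h01 : Disjoint (Ys 0) (Ys 1) := by
      rw [hYs]
      exact hdisjXY (-a) a (-(1 + b)) (b - 1) hd1b hd2b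
        (hsep (-a) (-(1 + b)) (Or.inr rfl) (Or.inr rfl))
    intro i j hij
    fin_cases i <;> fin_cases j <;>
      first
        | exact absurd rfl hij
        | exact h01
        | exact h01.symm

  have hXYd : ∀ i j, Disjoint (Xs i) (Ys j) := by
    intro i j
    fin_cases i <;> fin_cases j
    · exact hdisjsame a (-a)
    · show Disjoint (Xs 0) (Ys 1)
      rw [hXs, hYs]
      exact hdisjXY a (-a) (-(1 + b)) (b - 1) hd1 hd2b
        (hsep a (-(1 + b)) (Or.inl rfl) (Or.inr rfl))
    · show Disjoint (Xs 1) (Ys 0)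
      rw [hXs, hYs]
      refine hdisjXY (b - 1) (-(1 + b)) (-a) a hd2 hd1b ?_
      rw [hdsym]
      exact hsep (-a) (b - 1) (Or.inr rfl) (Or.inl rfl)
    · exact hdisjsame (b - 1) (-(1 + b))
  -- nonemptiness
  have hw01 : (![-a, 1] : Fin 2 → F) ≠ 0 := by
    intro h
    have := congrFun h 1
    simp at this
  have hw02 : (![1 - b, 1] : Fin 2 → F) ≠ 0 := by
    intro h
    have := congrFun h 1
    simp at this
  have hXne : ∀ i, (Xs i).Nonempty := by
    intro i
    fin_cases i
    · refine ⟨Projectivization.mk F ![-a, 1] hw01, ?_⟩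
      show Projectivization.mk F ![-a, 1] hw01 ∈ Xs 0
      rw [hXs]
      show v (_ + a * _) < c * v (_ + (-a) * _)
      rw [hrepcond a (-a) ![-a, 1] hw01]
      simp only [Matrix.cons_val_zero, Matrix.cons_val_one, Matrix.head_cons]
      rw [show -a + a * 1 = (0 : F) by ring, _root_.map_zero,
        show -a + (-a) * 1 = -(2 * a) by ring, v.map_neg]
      exact mul_pos hc0 (v.pos h2a)
    · refine ⟨Projectivization.mk F ![1 - b, 1] hw02, ?_⟩
      show Projectivization.mk F ![1 - b, 1] hw02 ∈ Xs 1
      rw [hXs]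
      show v (_ + (b - 1) * _) < c * v (_ + (-(1 + b)) * _)
      rw [hrepcond (b - 1) (-(1 + b)) ![1 - b, 1] hw02]
      simp only [Matrix.cons_val_zero, Matrix.cons_val_one, Matrix.head_cons]
      rw [show (1 - b) + (b - 1) * 1 = (0 : F) by ring, _root_.map_zero,
        show (1 - b) + (-(1 + b)) * 1 = -(2 * b) by ring, v.map_neg]
      exact mul_pos hc0 (v.pos h2b)
  -- the generators in the quotient
  set afun : Fin 2 → (Matrix (Fin 2) (Fin 2) F)ˣ ⧸ N :=
    fun i => QuotientGroup.mk' N (![g₁, g₂] i) with hafun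
  -- positivity helpers
  have hposL : ∀ (p q : F), p ≠ q → ∀ (w : Fin 2 → F), w ≠ 0 →
      c * v (w 0 + p * w 1) ≤ v (w 0 + q * w 1) → 0 < v (w 0 + q * w 1) := by
    intro p q hpq w hw hle
    rcases (v.nonneg (w 0 + q * w 1)).eq_or_lt with h | h
    · exfalso
      apply hw
      refine hzero p q hpq w ?_ ?_
      · have h1 : v (w 0 + p * w 1) ≤ 0 := by nlinarith [v.nonneg (w 0 + p * w 1)]
        exact v.eq_zero.mp (le_antisymm h1 (v.nonneg _))
      · exact v.eq_zero.mp h.symm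
    · exact h
  have hne1 : a ≠ -a := by
    intro h
    exact h2a (by linear_combination h)
  have hne1' : -a ≠ a := fun h => hne1 h.symm
  have hne2 : b - 1 ≠ -(1 + b) := by
    intro h
    exact h2b (by linear_combination h)
  have hne2' : -(1 + b) ≠ b - 1 := fun h => hne2 h.symm
  -- the ping pong conditions
  have hv2inv : v (2⁻¹ : F) = (t ^ 2)⁻¹ := by
    rw [_root_.map_inv₀, hv2]
  have ht2pos : (0 : ℝ) < t ^ 2 := by positivity
  -- generic forward ping pong step
  have hping : ∀ (g : (Matrix (Fin 2) (Fin 2) F)ˣ) (p q : F), p ≠ q →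
      (![1, p] ᵥ* (g : Matrix (Fin 2) (Fin 2) F) = (2 : F) • ![1, p]) →
      (![1, q] ᵥ* (g : Matrix (Fin 2) (Fin 2) F) = ![1, q]) →
      ∀ (w : Fin 2 → F) (hw : w ≠ 0),
      ¬ (v (w 0 + q * w 1) < c * v (w 0 + p * w 1)) →
      v (((g : Matrix (Fin 2) (Fin 2) F) *ᵥ w) 0 +
          p * ((g : Matrix (Fin 2) (Fin 2) F) *ᵥ w) 1) <
        c * v (((g : Matrix (Fin 2) (Fin 2) F) *ᵥ w) 0 +
          q * ((g : Matrix (Fin 2) (Fin 2) F) *ᵥ w) 1) := by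
    intro g p q hpq hrp hrq w hw hnot
    push_neg at hnot
    rw [hfun g p 2 hrp w, hfun g q 1 (by rw [one_smul]; exact hrq) w, one_mul, _root_.map_mul, hv2]
    have hLq : 0 < v (w 0 + q * w 1) := hposL p q hpq w hw hnot
    nlinarith [hnot, hLq, hsc, hc0, v.nonneg (w 0 + p * w 1)]
  -- generic backward ping pong step
  have hpong : ∀ (g : (Matrix (Fin 2) (Fin 2) F)ˣ) (p q : F), q ≠ p →
      (![1, p] ᵥ* ((g⁻¹ : (Matrix (Fin 2) (Fin 2) F)ˣ) : Matrix (Fin 2) (Fin 2) F)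
        = (2⁻¹ : F) • ![1, p]) →
      (![1, q] ᵥ* ((g⁻¹ : (Matrix (Fin 2) (Fin 2) F)ˣ) : Matrix (Fin 2) (Fin 2) F) = ![1, q]) →
      ∀ (w : Fin 2 → F) (hw : w ≠ 0),
      ¬ (v (w 0 + p * w 1) < c * v (w 0 + q * w 1)) →
      v ((((g⁻¹ : (Matrix (Fin 2) (Fin 2) F)ˣ) : Matrix (Fin 2) (Fin 2) F) *ᵥ w) 0 +
          q * (((g⁻¹ : (Matrix (Fin 2) (Fin 2) F)ˣ) : Matrix (Fin 2) (Fin 2) F) *ᵥ w) 1) <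
        c * v ((((g⁻¹ : (Matrix (Fin 2) (Fin 2) F)ˣ) : Matrix (Fin 2) (Fin 2) F) *ᵥ w) 0 +
          p * (((g⁻¹ : (Matrix (Fin 2) (Fin 2) F)ˣ) : Matrix (Fin 2) (Fin 2) F) *ᵥ w) 1) := by
    intro g p q hqp hrp hrq w hw hnot
    push_neg at hnot
    rw [hfun (g⁻¹) p (2⁻¹) hrp w, hfun (g⁻¹) q 1 (by rw [one_smul]; exact hrq) w, one_mul,
      _root_.map_mul, hv2inv]
    have hLp : 0 < v (w 0 + p * w 1) := hposL q p hqp w hw hnot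
    have key : t ^ 2 * v (w 0 + q * w 1) < c * v (w 0 + p * w 1) := by
      nlinarith [hnot, hLp, hsc, hc0, v.nonneg (w 0 + q * w 1)]
    calc v (w 0 + q * w 1) = (t ^ 2)⁻¹ * (t ^ 2 * v (w 0 + q * w 1)) := by
          field_simp
    _ < (t ^ 2)⁻¹ * (c * v (w 0 + p * w 1)) := by
          exact mul_lt_mul_of_pos_left key (inv_pos.mpr ht2pos)
    _ = c * ((t ^ 2)⁻¹ * v (w 0 + p * w 1)) := by ring
  -- forward inclusion
  have hX : ∀ i, afun i • (Ys i)ᶜ ⊆ Xs i := by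
    intro i
    fin_cases i
    · show afun 0 • (Ys 0)ᶜ ⊆ Xs 0
      intro x hx
      rw [Set.mem_smul_set] at hx
      obtain ⟨y, hy, rfl⟩ := hx
      revert hy
      induction y using Projectivization.ind with
      | h w hw =>
        intro hy
        have hyc : ¬ (v (w 0 + (-a) * w 1) < c * v (w 0 + a * w 1)) := by
          intro hcontra
          apply hy
          show v _ < c * v _
          rw [hrepcond (-a) a w hw]
          exact hcontra
        have hgm : afun 0 = QuotientGroup.mk' N g₁ := by rw [hafun]; simp
        rw [hgm, hsmul g₁ w hw]
        show v _ < c * v _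
        rw [hrepcond a (-a) _ (unit_mulVec_ne_zero g₁ hw)]
        exact hping g₁ a (-a) hne1 hrow1 hrow2 w hw hyc
    · show afun 1 • (Ys 1)ᶜ ⊆ Xs 1
      intro x hx
      rw [Set.mem_smul_set] at hx
      obtain ⟨y, hy, rfl⟩ := hx
      revert hy
      induction y using Projectivization.ind with
      | h w hw =>
        intro hy
        have hyc : ¬ (v (w 0 + (-(1 + b)) * w 1) < c * v (w 0 + (b - 1) * w 1)) := by
          intro hcontra
          apply hy
          show v _ < c * v _
          rw [hrepcond (-(1 + b)) (b - 1) w hw]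
          exact hcontra
        have hgm : afun 1 = QuotientGroup.mk' N g₂ := by rw [hafun]; simp
        rw [hgm, hsmul g₂ w hw]
        show v _ < c * v _
        rw [hrepcond (b - 1) (-(1 + b)) _ (unit_mulVec_ne_zero g₂ hw)]
        exact hping g₂ (b - 1) (-(1 + b)) hne2 hrow3 hrow4 w hw hyc
  -- backward inclusion
  have hY : ∀ i, afun⁻¹ i • (Xs i)ᶜ ⊆ Ys i := by
    intro i
    fin_cases i
    · show afun⁻¹ 0 • (Xs 0)ᶜ ⊆ Ys 0
      intro x hx
      rw [Set.mem_smul_set] at hx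
      obtain ⟨y, hy, rfl⟩ := hx
      revert hy
      induction y using Projectivization.ind with
      | h w hw =>
        intro hy
        have hyc : ¬ (v (w 0 + a * w 1) < c * v (w 0 + (-a) * w 1)) := by
          intro hcontra
          apply hy
          show v _ < c * v _
          rw [hrepcond a (-a) w hw]
          exact hcontra
        have hgm : afun⁻¹ 0 = QuotientGroup.mk' N (g₁⁻¹) := by
          rw [Pi.inv_apply, hafun]
          simp
        rw [hgm, hsmul (g₁⁻¹) w hw]
        show v _ < c * v _
        rw [hrepcond (-a) a _ (unit_mulVec_ne_zero (g₁⁻¹) hw)]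
        exact hpong g₁ a (-a) hne1' (hrowinv g₁ ![1, a] hrow1) (hrowfix g₁ ![1, -a] hrow2)
          w hw hyc
    · show afun⁻¹ 1 • (Xs 1)ᶜ ⊆ Ys 1
      intro x hx
      rw [Set.mem_smul_set] at hx
      obtain ⟨y, hy, rfl⟩ := hx
      revert hy
      induction y using Projectivization.ind with
      | h w hw =>
        intro hy
        have hyc : ¬ (v (w 0 + (b - 1) * w 1) < c * v (w 0 + (-(1 + b)) * w 1)) := by
          intro hcontra
          apply hy
          show v _ < c * v _
          rw [hrepcond (b - 1) (-(1 + b)) w hw]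
          exact hcontra
        have hgm : afun⁻¹ 1 = QuotientGroup.mk' N (g₂⁻¹) := by
          rw [Pi.inv_apply, hafun]
          simp
        rw [hgm, hsmul (g₂⁻¹) w hw]
        show v _ < c * v _
        rw [hrepcond (-(1 + b)) (b - 1) _ (unit_mulVec_ne_zero (g₂⁻¹) hw)]
        exact hpong g₂ (b - 1) (-(1 + b)) hne2' (hrowinv g₂ ![1, b - 1] hrow3)
          (hrowfix g₂ ![1, -(1 + b)] hrow4) w hw hyc
  -- conclude with the ping pong lemma
  have hgoal : (QuotientGroup.mk' N).comp (FreeGroup.lift ![g₁, g₂]) = FreeGroup.lift afun := by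
    ext i
    fin_cases i <;> simp [hafun]
  rw [hgoal]
  exact pingpong_wrapper afun Xs Ys hXne hXd hYd hXYd hX hY
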